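/- arXiv:0809.1235 — 7 statements merged into one kernel-verified Lean document; each statement's English description precedes it below -/
import Mathlib

section
/- Let X be a topological space, E a Hausdorff topological abelian group, f : X → X a map, and c : X → E any function. Let p ∈ X be a fixed point of f. Suppose ξ₁, ξ₂ : X → E are continuous functions both solving the same commutative cohomology equation, i.e. ξᵢ(f x) − ξᵢ(x) = c(x) for all x ∈ X and i = 1,2, and suppose ξ₁(p) = ξ₂(p). Then for every x ∈ X such that the sequence f^[n](x) converges to p as n → ∞, one has ξ₁(x) = ξ₂(x). -/
/-- Uniqueness of continuous solutions of a commutative cohomology equation on the stable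
set of a fixed point: two continuous solutions agreeing at the fixed point agree at every
point whose forward orbit converges to the fixed point. -/
theorem stmt_4 {X E : Type*} [TopologicalSpace X]
    [AddCommGroup E] [TopologicalSpace E] [T2Space E] [IsTopologicalAddGroup E]
    (f : X → X) (c : X → E) (p : X) (hp : f p = p)
    (ξ₁ ξ₂ : X → E) (hc₁ : Continuous ξ₁) (hc₂ : Continuous ξ₂)
    (he₁ : ∀ x, ξ₁ (f x) - ξ₁ x = c x) (he₂ : ∀ x, ξ₂ (f x) - ξ₂ x = c x)
    (hpeq : ξ₁ p = ξ₂ p) :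
    ∀ x, Filter.Tendsto (fun n => f^[n] x) Filter.atTop (nhds p) → ξ₁ x = ξ₂ x := by
  intro x hx
  have hAf : ∀ y, ξ₁ (f y) - ξ₂ (f y) = ξ₁ y - ξ₂ y := by
    intro y
    have h1 := he₁ y
    have h2 := he₂ y
    have : ξ₁ (f y) - ξ₁ y = ξ₂ (f y) - ξ₂ y := h1.trans h2.symm
    exact sub_eq_sub_iff_sub_eq_sub.mp this
  have hiter : ∀ n : ℕ, ξ₁ (f^[n] x) - ξ₂ (f^[n] x) = ξ₁ x - ξ₂ x := by
    intro n
    induction n with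
    | zero => simp
    | succ n ih => rw [Function.iterate_succ_apply', hAf, ih]
  have h1 : Filter.Tendsto (fun n => ξ₁ (f^[n] x) - ξ₂ (f^[n] x)) Filter.atTop
      (nhds (ξ₁ p - ξ₂ p)) := ((hc₁.sub hc₂).continuousAt.tendsto).comp hx
  have h2 : Filter.Tendsto (fun n => ξ₁ (f^[n] x) - ξ₂ (f^[n] x)) Filter.atTop
      (nhds (ξ₁ x - ξ₂ x)) := by
    simp only [hiter]; exact tendsto_const_nhds
  have := tendsto_nhds_unique h1 h2
  rw [hpeq, sub_self] at this
  exact sub_eq_zero.mp this.symm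
end

section
/- Let A be a unital Banach algebra over ℝ, U ⊆ ℝ^d open, and n ≥ 1. Let η₀, …, η_{n−1} : U → A and φ₀, …, φ_n : U → A be maps such that: (i) each φ_i(u) is invertible in A for all u ∈ U; (ii) φ_{i+1}(u) = η_i(u) * φ_i(u) for all u ∈ U and 0 ≤ i ≤ n−1; (iii) φ_n = φ₀ as functions on U (periodicity); (iv) each η_i and each φ_i is Fréchet differentiable on U, with Dη_i(u) : ℝ^d → A the derivative of η_i at u. Then for all u ∈ U and all v ∈ ℝ^d: Σ_{i=0}^{n−1} φ_{i+1}(u)⁻¹ * (Dη_i(u) v) * φ_i(u) = 0. -/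
/-- Differentiating the periodic orbit obstruction: if `φ_{i+1} = η_i * φ_i` on `U`,
`φ_n = φ_0`, each `φ_i(u)` is invertible and all maps are differentiable on `U`, then the
periodic orbit obstruction of the derived commutative cohomology equation vanishes:
`Σ_{i<n} φ_{i+1}(u)⁻¹ (Dη_i(u) v) φ_i(u) = 0`. -/
theorem stmt_6 {A : Type*} [NormedRing A] [NormedAlgebra ℝ A] [CompleteSpace A]
    {d : ℕ} (U : Set (EuclideanSpace ℝ (Fin d))) (hU : IsOpen U)
    (n : ℕ) (hn : 1 ≤ n)
    (η φ : ℕ → EuclideanSpace ℝ (Fin d) → A)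
    (Dη : ℕ → EuclideanSpace ℝ (Fin d) → EuclideanSpace ℝ (Fin d) →L[ℝ] A)
    (hunit : ∀ i ≤ n, ∀ u ∈ U, IsUnit (φ i u))
    (hcoh : ∀ u ∈ U, ∀ i < n, φ (i + 1) u = η i u * φ i u)
    (hper : ∀ u ∈ U, φ n u = φ 0 u)
    (hdη : ∀ i < n, ∀ u ∈ U, HasFDerivAt (η i) (Dη i u) u)
    (hdφ : ∀ i ≤ n, ∀ u ∈ U, DifferentiableAt ℝ (φ i) u) :
    ∀ u ∈ U, ∀ v : EuclideanSpace ℝ (Fin d),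
      ∑ i ∈ Finset.range n, Ring.inverse (φ (i + 1) u) * (Dη i u v) * φ i u = 0 := by
  intro u hu v
  set g : ℕ → A := fun i => Ring.inverse (φ i u) * (fderiv ℝ (φ i) u v) with hg
  have hmemnhds : U ∈ nhds u := hU.mem_nhds hu
  have key : ∀ i ∈ Finset.range n,
      Ring.inverse (φ (i + 1) u) * (Dη i u v) * φ i u = g (i + 1) - g i := by
    intro i hi
    rw [Finset.mem_range] at hi
    -- derivative of φ (i+1)
    have hφi : HasFDerivAt (φ i) (fderiv ℝ (φ i) u) u :=
      (hdφ i (le_of_lt hi) u hu).hasFDerivAt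
    have hprod : HasFDerivAt (fun y => η i y * φ i y)
        (η i u • fderiv ℝ (φ i) u + (Dη i u).smulRight (φ i u)) u :=
      (hdη i hi u hu).mul' hφi
    have heq : φ (i + 1) =ᶠ[nhds u] fun y => η i y * φ i y :=
      Filter.eventuallyEq_of_mem hmemnhds (fun y hy => hcoh y hy i hi)
    have hφsucc : HasFDerivAt (φ (i + 1))
        (η i u • fderiv ℝ (φ i) u + (Dη i u).smulRight (φ i u)) u :=
      hprod.congr_of_eventuallyEq heq
    have hD : fderiv ℝ (φ (i + 1)) u v
        = η i u * (fderiv ℝ (φ i) u v) + (Dη i u v) * φ i u := by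
      rw [hφsucc.fderiv]; simp [ContinuousLinearMap.smulRight_apply, smul_eq_mul]
    have hui : IsUnit (φ i u) := hunit i (le_of_lt hi) u hu
    have hus : IsUnit (φ (i + 1) u) := hunit (i + 1) hi u hu
    have hinvη : Ring.inverse (φ (i + 1) u) * η i u = Ring.inverse (φ i u) := by
      have hη : η i u = φ (i + 1) u * Ring.inverse (φ i u) := by
        rw [hcoh u hu i hi, mul_assoc, Ring.mul_inverse_cancel _ hui, mul_one]
      rw [hη, ← mul_assoc, Ring.inverse_mul_cancel _ hus, one_mul]
    have : (Dη i u v) * φ i u = fderiv ℝ (φ (i + 1)) u v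
        - η i u * (fderiv ℝ (φ i) u v) := by rw [hD]; abel
    rw [mul_assoc, this, mul_sub, ← mul_assoc, hinvη, hg]
  rw [Finset.sum_congr rfl key, Finset.sum_range_sub]
  have hfd : fderiv ℝ (φ n) u = fderiv ℝ (φ 0) u := by
    apply Filter.EventuallyEq.fderiv_eq
    exact Filter.eventuallyEq_of_mem hmemnhds (fun y hy => hper y hy)
  simp [hg, hfd, hper u hu]
end

section
/- Let X be a metric space, U ⊆ ℝ^d an open convex set, and E a Banach space. Let g : X → U → E and h : X → U → (ℝ^d →L E) (continuous linear maps) satisfy: (i) for every u ∈ U, the map x ↦ g(x)(u) is continuous on X; (ii) the map (x,u) ↦ h(x)(u) is continuous on X × U; (iii) there is a dense subset D ⊆ X such that for every x ∈ D and every u ∈ U, the map w ↦ g(x)(w) is Fréchet differentiable at u with derivative h(x)(u). Then for every x ∈ X and every u ∈ U, the map w ↦ g(x)(w) is Fréchet differentiable at u with derivative h(x)(u). -/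
open Filter Topology


/-- Upgrading differentiability with respect to parameters from a dense set of base
points: if `x ↦ g x u` is continuous for each `u ∈ U`, `(x,u) ↦ h x u` is jointly
continuous, and for `x` in a dense set `g x` is differentiable on the open convex set `U`
with derivative `h x`, then the same holds for every `x`. -/
theorem stmt_8 {X : Type*} [MetricSpace X] {d : ℕ}
    (U : Set (EuclideanSpace ℝ (Fin d))) (hU : IsOpen U) (hconv : Convex ℝ U)
    {E : Type*} [NormedAddCommGroup E] [NormedSpace ℝ E] [CompleteSpace E]
    (g : X → EuclideanSpace ℝ (Fin d) → E)
    (h : X → EuclideanSpace ℝ (Fin d) → EuclideanSpace ℝ (Fin d) →L[ℝ] E)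
    (hg : ∀ u ∈ U, Continuous fun x => g x u)
    (hh : ContinuousOn (fun p : X × EuclideanSpace ℝ (Fin d) => h p.1 p.2)
      (Set.univ ×ˢ U))
    (D : Set X) (hD : Dense D)
    (hdiff : ∀ x ∈ D, ∀ u ∈ U, HasFDerivAt (g x) (h x u) u) :
    ∀ x : X, ∀ u ∈ U, HasFDerivAt (g x) (h x u) u := by
  intro x u hu
  have hxD : (𝓝[D] x).NeBot := mem_closure_iff_nhdsWithin_neBot.mp (hD x)
  have hUnhds : U ∈ 𝓝 u := hU.mem_nhds hu
  -- joint continuity of h at points of {x} × U (full neighborhoods, since univ ×ˢ U is open)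
  have hHc : ∀ w ∈ U, ContinuousAt (fun p : X × EuclideanSpace ℝ (Fin d) => h p.1 p.2) (x, w) := by
    intro w hw
    have hmem : (Set.univ ×ˢ U : Set (X × EuclideanSpace ℝ (Fin d))) ∈ 𝓝 (x, w) :=
      (isOpen_univ.prod hU).mem_nhds ⟨Set.mem_univ _, hw⟩
    exact (hh (x, w) ⟨Set.mem_univ _, hw⟩).continuousAt hmem
  -- uniform-on-filter convergence of the derivatives
  have hf' : TendstoUniformlyOnFilter h (h x) (𝓝[D] x) (𝓝 u) := by
    rw [Metric.tendstoUniformlyOnFilter_iff]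
    intro ε hε
    have t1 : Filter.Tendsto (fun p : X × EuclideanSpace ℝ (Fin d) => h p.1 p.2)
        (𝓝[D] x ×ˢ 𝓝 u) (𝓝 (h x u)) := by
      refine (hHc u hu).tendsto.mono_left ?_
      rw [nhds_prod_eq]
      exact Filter.prod_mono nhdsWithin_le_nhds le_rfl
    have t2 : Filter.Tendsto (fun p : X × EuclideanSpace ℝ (Fin d) => h x p.2)
        (𝓝[D] x ×ˢ 𝓝 u) (𝓝 (h x u)) := by
      have : Filter.Tendsto (fun w : EuclideanSpace ℝ (Fin d) => h x w) (𝓝 u) (𝓝 (h x u)) :=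
        (hHc u hu).tendsto.comp ((Continuous.prodMk continuous_const continuous_id).tendsto u)
      exact this.comp Filter.tendsto_snd
    have tdist : Filter.Tendsto
        (fun p : X × EuclideanSpace ℝ (Fin d) => dist (h x p.2) (h p.1 p.2))
        (𝓝[D] x ×ˢ 𝓝 u) (𝓝 0) := by
      have := Filter.Tendsto.dist t2 t1
      simpa using this
    exact tdist.eventually_lt_const hε
  -- eventually the derivative identity holds for base points in D and parameters in U
  have hf : ∀ᶠ p : X × EuclideanSpace ℝ (Fin d) in 𝓝[D] x ×ˢ 𝓝 u,
      HasFDerivAt (g p.1) (h p.1 p.2) p.2 := by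
    have h1 : ∀ᶠ y in 𝓝[D] x, y ∈ D := eventually_mem_nhdsWithin
    have h2 : ∀ᶠ w in 𝓝 u, w ∈ U := hUnhds
    filter_upwards [h1.prod_mk h2] with p hp
    exact hdiff p.1 hp.1 p.2 hp.2
  -- pointwise convergence of g
  have hfg : ∀ᶠ w in 𝓝 u, Filter.Tendsto (fun y => g y w) (𝓝[D] x) (𝓝 (g x w)) := by
    filter_upwards [hUnhds] with w hw
    exact ((hg w hw).tendsto x).mono_left nhdsWithin_le_nhds
  exact hasFDerivAt_of_tendstoUniformlyOnFilter hf' hf hfg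
end

section
/- Let A be a unital Banach algebra over ℝ, U ⊆ ℝ^d open, M a metric space, f : M → M, p ∈ M with f(p) = p, and x ∈ M, C > 0, 0 < λ < 1 with d(f^[n](x), p) ≤ C λⁿ for all n ≥ 0. Let 0 < α ≤ 1 and K > 0. Let η : M → U → A and φ : M → U → A satisfy: (i) φ(z)(u) is invertible with ‖φ(z)(u)‖ ≤ K and ‖φ(z)(u)⁻¹‖ ≤ K for all z, u; (ii) φ(f z)(u) = η(z)(u) * φ(z)(u) for all z ∈ M, u ∈ U; (iii) for every z ∈ M, u ↦ η(z)(u) is Fréchet differentiable on U with derivative Dη(z)(u) : ℝ^d → A satisfying ‖Dη(z)(u)‖ ≤ K; (iv) for all z, z' ∈ M and u ∈ U: ‖η(z)(u) − η(z')(u)‖ ≤ K d(z,z')^α, ‖Dη(z)(u) − Dη(z')(u)‖ ≤ K d(z,z')^α, and ‖φ(z)(u) − φ(z')(u)‖ ≤ K d(z,z')^α; (v) the fixed-point obstruction vanishes: φ(p)(u)⁻¹ * (Dη(p)(u) v) * φ(p)(u) = 0 for all u ∈ U, v ∈ ℝ^d; (vi) u ↦ φ(p)(u) is Fréchet differentiable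 on U. Then u ↦ φ(x)(u) is Fréchet differentiable at every u ∈ U. -/
set_option maxHeartbeats 1000000

/-- Differentiability with respect to parameters of solutions of a Banach-algebra valued
cohomology equation at points of the exponential stable set of a fixed point `p`:
under uniform bounds, Hölder continuity in the base point, vanishing of the fixed-point
obstruction and differentiability of `u ↦ φ p u`, the map `u ↦ φ x u` is differentiable
on `U` for any `x` with `d(f^[n] x, p) ≤ C λⁿ`. -/
theorem stmt_9 {A : Type*} [NormedRing A] [NormedAlgebra ℝ A] [CompleteSpace A]
    {d : ℕ} (U : Set (EuclideanSpace ℝ (Fin d))) (hU : IsOpen U)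
    {M : Type*} [MetricSpace M] (f : M → M) (p : M) (hp : f p = p)
    (x : M) (C : ℝ) (hC : 0 < C) (lam : ℝ) (hlam0 : 0 < lam) (hlam1 : lam < 1)
    (hx : ∀ n : ℕ, dist (f^[n] x) p ≤ C * lam ^ n)
    (α : ℝ) (hα0 : 0 < α) (hα1 : α ≤ 1) (K : ℝ) (hK : 0 < K)
    (η φ : M → EuclideanSpace ℝ (Fin d) → A)
    (Dη : M → EuclideanSpace ℝ (Fin d) → EuclideanSpace ℝ (Fin d) →L[ℝ] A)
    (hφ : ∀ z : M, ∀ u ∈ U,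
      IsUnit (φ z u) ∧ ‖φ z u‖ ≤ K ∧ ‖Ring.inverse (φ z u)‖ ≤ K)
    (hcoh : ∀ z : M, ∀ u ∈ U, φ (f z) u = η z u * φ z u)
    (hdη : ∀ z : M, ∀ u ∈ U, HasFDerivAt (η z) (Dη z u) u ∧ ‖Dη z u‖ ≤ K)
    (hHolη : ∀ z z' : M, ∀ u ∈ U, ‖η z u - η z' u‖ ≤ K * dist z z' ^ α)
    (hHolDη : ∀ z z' : M, ∀ u ∈ U, ‖Dη z u - Dη z' u‖ ≤ K * dist z z' ^ α)
    (hHolφ : ∀ z z' : M, ∀ u ∈ U, ‖φ z u - φ z' u‖ ≤ K * dist z z' ^ α)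
    (hobs : ∀ u ∈ U, ∀ v : EuclideanSpace ℝ (Fin d),
      Ring.inverse (φ p u) * (Dη p u v) * φ p u = 0)
    (hdφp : ∀ u ∈ U, DifferentiableAt ℝ (φ p) u) :
    ∀ u ∈ U, DifferentiableAt ℝ (fun w => φ x w) u := by
  classical
  set r : ℝ := lam ^ α with hrdef
  have hr0 : 0 < r := Real.rpow_pos_of_pos hlam0 α
  have hr1 : r < 1 := Real.rpow_lt_one hlam0.le hlam1 hα0
  -- powered distance bound
  have hdistpow : ∀ n : ℕ, dist (f^[n] x) p ^ α ≤ C ^ α * r ^ n := by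
    intro n
    calc dist (f^[n] x) p ^ α ≤ (C * lam ^ n) ^ α :=
          Real.rpow_le_rpow dist_nonneg (hx n) hα0.le
      _ = C ^ α * (lam ^ n) ^ α := Real.mul_rpow hC.le (pow_nonneg hlam0.le n)
      _ = C ^ α * r ^ n := by
          rw [← Real.rpow_natCast lam n, ← Real.rpow_natCast r n, hrdef,
            ← Real.rpow_mul hlam0.le, ← Real.rpow_mul hlam0.le, mul_comm (n : ℝ) α]
  -- operator norm helpers
  have hsmulA : ∀ (y : A) (g : EuclideanSpace ℝ (Fin d) →L[ℝ] A),
      ‖y • g‖ ≤ ‖y‖ * ‖g‖ := by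
    intro y g
    refine ContinuousLinearMap.opNorm_le_bound _ (by positivity) fun v => ?_
    rw [ContinuousLinearMap.smul_apply, smul_eq_mul, mul_assoc]
    exact (norm_mul_le _ _).trans
      (mul_le_mul_of_nonneg_left (g.le_opNorm v) (norm_nonneg y))
  have hsmulR : ∀ (g : EuclideanSpace ℝ (Fin d) →L[ℝ] A) (y : A),
      ‖g.smulRight y‖ ≤ ‖g‖ * ‖y‖ := by
    intro g y
    refine ContinuousLinearMap.opNorm_le_bound _ (by positivity) fun v => ?_
    rw [ContinuousLinearMap.smulRight_apply, smul_eq_mul]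
    calc ‖g v * y‖ ≤ ‖g v‖ * ‖y‖ := norm_mul_le _ _
      _ ≤ (‖g‖ * ‖v‖) * ‖y‖ :=
          mul_le_mul_of_nonneg_right (g.le_opNorm v) (norm_nonneg y)
      _ = ‖g‖ * ‖y‖ * ‖v‖ := by ring
  -- η basic identities
  have hηeq : ∀ z : M, ∀ u ∈ U, η z u = φ (f z) u * Ring.inverse (φ z u) := by
    intro z u hu
    rw [hcoh z u hu]
    exact (Ring.mul_inverse_cancel_right _ _ (hφ z u hu).1).symm
  have hηunit : ∀ z : M, ∀ u ∈ U, IsUnit (η z u) := by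
    intro z u hu
    rw [hηeq z u hu]
    exact ((hφ (f z) u hu).1).mul (IsUnit.ringInverse (hφ z u hu).1)
  have hinvηeq : ∀ z : M, ∀ u ∈ U,
      Ring.inverse (η z u) = φ z u * Ring.inverse (φ (f z) u) := by
    intro z u hu
    have h1 : (φ z u * Ring.inverse (φ (f z) u)) * η z u = 1 := by
      rw [hηeq z u hu, mul_assoc,
        Ring.inverse_mul_cancel_left _ _ (hφ (f z) u hu).1]
      exact Ring.mul_inverse_cancel _ (hφ z u hu).1
    calc Ring.inverse (η z u) = 1 * Ring.inverse (η z u) := (one_mul _).symm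
      _ = (φ z u * Ring.inverse (φ (f z) u)) * η z u * Ring.inverse (η z u) := by
          rw [h1]
      _ = φ z u * Ring.inverse (φ (f z) u) :=
          Ring.mul_inverse_cancel_right _ _ (hηunit z u hu)
  have hinvηnorm : ∀ z : M, ∀ u ∈ U, ‖Ring.inverse (η z u)‖ ≤ K * K := by
    intro z u hu
    rw [hinvηeq z u hu]
    exact (norm_mul_le _ _).trans
      (mul_le_mul (hφ z u hu).2.1 (hφ (f z) u hu).2.2 (norm_nonneg _) hK.le)
  have hη1 : ∀ u ∈ U, η p u = 1 := by
    intro u hu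
    rw [hηeq p u hu, hp]
    exact Ring.mul_inverse_cancel _ (hφ p u hu).1
  -- vanishing derivative at p
  have hDη0 : ∀ u ∈ U, Dη p u = 0 := by
    intro u hu
    ext v
    obtain ⟨w, hw⟩ := (hφ p u hu).1
    have h0 := hobs u hu v
    rw [← hw, Ring.inverse_unit] at h0
    have h1 : (↑w : A) * (↑w⁻¹ * Dη p u v * ↑w) * ↑w⁻¹ = Dη p u v := by
      rw [mul_assoc (↑w⁻¹ : A) (Dη p u v) (↑w : A), Units.mul_inv_cancel_left,
        Units.mul_inv_cancel_right]
    rw [ContinuousLinearMap.zero_apply, ← h1, h0, mul_zero, zero_mul]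
  -- quantitative bounds along the orbit
  have hDηnorm : ∀ n : ℕ, ∀ u ∈ U, ‖Dη (f^[n] x) u‖ ≤ K * C ^ α * r ^ n := by
    intro n u hu
    have h := hHolDη (f^[n] x) p u hu
    rw [hDη0 u hu, sub_zero] at h
    calc ‖Dη (f^[n] x) u‖ ≤ K * dist (f^[n] x) p ^ α := h
      _ ≤ K * (C ^ α * r ^ n) := mul_le_mul_of_nonneg_left (hdistpow n) hK.le
      _ = K * C ^ α * r ^ n := by ring
  have hηnear1 : ∀ n : ℕ, ∀ u ∈ U, ‖η (f^[n] x) u - 1‖ ≤ K * C ^ α * r ^ n := by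
    intro n u hu
    have h := hHolη (f^[n] x) p u hu
    rw [hη1 u hu] at h
    calc ‖η (f^[n] x) u - 1‖ ≤ K * dist (f^[n] x) p ^ α := h
      _ ≤ K * (C ^ α * r ^ n) := mul_le_mul_of_nonneg_left (hdistpow n) hK.le
      _ = K * C ^ α * r ^ n := by ring
  set a : ℝ := K * K * (K * C ^ α) with hadef
  have ha : 0 < a := by positivity
  have hinvηnear1 : ∀ n : ℕ, ∀ u ∈ U,
      ‖Ring.inverse (η (f^[n] x) u) - 1‖ ≤ a * r ^ n := by
    intro n u hu
    have heq : Ring.inverse (η (f^[n] x) u) - 1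
        = Ring.inverse (η (f^[n] x) u) * (1 - η (f^[n] x) u) := by
      rw [mul_sub, mul_one, Ring.inverse_mul_cancel _ (hηunit (f^[n] x) u hu)]
    rw [heq]
    calc ‖Ring.inverse (η (f^[n] x) u) * (1 - η (f^[n] x) u)‖
        ≤ ‖Ring.inverse (η (f^[n] x) u)‖ * ‖1 - η (f^[n] x) u‖ := norm_mul_le _ _
      _ ≤ (K * K) * (K * C ^ α * r ^ n) := by
          refine mul_le_mul (hinvηnorm (f^[n] x) u hu) ?_ (norm_nonneg _)
            (by positivity)
          rw [← neg_sub, norm_neg]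
          exact hηnear1 n u hu
      _ = a * r ^ n := by rw [hadef]; ring
  -- the approximating sequence
  set P : ℕ → EuclideanSpace ℝ (Fin d) → A :=
    fun n u => φ x u * Ring.inverse (φ (f^[n] x) u) with hPdef
  have hPnorm : ∀ n : ℕ, ∀ u ∈ U, ‖P n u‖ ≤ K * K := by
    intro n u hu
    exact (norm_mul_le _ _).trans
      (mul_le_mul (hφ x u hu).2.1 (hφ (f^[n] x) u hu).2.2 (norm_nonneg _) hK.le)
  have hP0 : ∀ u ∈ U, P 0 u = 1 := by
    intro u hu
    simp only [hPdef, Function.iterate_zero_apply]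
    exact Ring.mul_inverse_cancel _ (hφ x u hu).1
  have hPrec : ∀ n : ℕ, ∀ u ∈ U,
      P (n + 1) u = P n u * Ring.inverse (η (f^[n] x) u) := by
    intro n u hu
    have hit : f^[n + 1] x = f (f^[n] x) := Function.iterate_succ_apply' f n x
    simp only [hPdef]
    rw [hinvηeq (f^[n] x) u hu, hit, mul_assoc (φ x u),
      Ring.inverse_mul_cancel_left _ _ (hφ (f^[n] x) u hu).1]
  -- differentiability of the approximants
  have hder : ∀ n : ℕ, ∀ u ∈ U, DifferentiableAt ℝ (P n) u := by
    intro n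
    induction n with
    | zero =>
      intro u hu
      exact (differentiableAt_const (1 : A)).congr_of_eventuallyEq
        (Filter.eventuallyEq_of_mem (hU.mem_nhds hu) fun w hw => hP0 w hw)
    | succ n ih =>
      intro u hu
      have hinv : DifferentiableAt ℝ (fun w => Ring.inverse (η (f^[n] x) w)) u :=
        (differentiableAt_inverse (hηunit (f^[n] x) u hu)).comp u
          (hdη (f^[n] x) u hu).1.differentiableAt
      exact ((ih u hu).mul hinv).congr_of_eventuallyEq
        (Filter.eventuallyEq_of_mem (hU.mem_nhds hu) fun w hw => hPrec n w hw)
  have hfd0 : ∀ u ∈ U, fderiv ℝ (P 0) u = 0 := by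
    intro u hu
    have he : P 0 =ᶠ[nhds u] fun _ => (1 : A) :=
      Filter.eventuallyEq_of_mem (hU.mem_nhds hu) fun w hw => hP0 w hw
    rw [he.fderiv_eq, fderiv_const_apply]
  have hfds : ∀ n : ℕ, ∀ u ∈ U, fderiv ℝ (P (n + 1)) u
      = P n u • ((-(ContinuousLinearMap.mulLeftRight ℝ A
            (Ring.inverse (η (f^[n] x) u)) (Ring.inverse (η (f^[n] x) u)))).comp
          (Dη (f^[n] x) u))
        + (fderiv ℝ (P n) u).smulRight (Ring.inverse (η (f^[n] x) u)) := by
    intro n u hu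
    obtain ⟨v, hv⟩ := hηunit (f^[n] x) u hu
    have h1 : HasFDerivAt (Ring.inverse : A → A)
        (-(ContinuousLinearMap.mulLeftRight ℝ A
          (Ring.inverse (η (f^[n] x) u)) (Ring.inverse (η (f^[n] x) u))))
        (η (f^[n] x) u) := by
      rw [← hv, Ring.inverse_unit]
      exact hasFDerivAt_ringInverse v
    have h2 := h1.comp u (hdη (f^[n] x) u hu).1
    have h3 := (hder n u hu).hasFDerivAt.mul' h2
    have h4 : HasFDerivAt (P (n + 1))
        (P n u • ((-(ContinuousLinearMap.mulLeftRight ℝ A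
            (Ring.inverse (η (f^[n] x) u)) (Ring.inverse (η (f^[n] x) u)))).comp
          (Dη (f^[n] x) u))
        + (fderiv ℝ (P n) u).smulRight (Ring.inverse (η (f^[n] x) u))) u :=
      h3.congr_of_eventuallyEq
        (Filter.eventuallyEq_of_mem (hU.mem_nhds hu) fun w hw => hPrec n w hw)
    exact h4.fderiv
  set c : ℝ := (K * K) * ((K * K) * (K * K) * (K * C ^ α)) with hcdef
  have hc : 0 < c := by positivity
  -- one-step difference bound
  have hdiffb : ∀ n : ℕ, ∀ u ∈ U,
      ‖fderiv ℝ (P (n + 1)) u - fderiv ℝ (P n) u‖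
        ≤ ‖fderiv ℝ (P n) u‖ * (a * r ^ n) + c * r ^ n := by
    intro n u hu
    set i : A := Ring.inverse (η (f^[n] x) u) with hidef
    set B : EuclideanSpace ℝ (Fin d) →L[ℝ] A :=
      (-(ContinuousLinearMap.mulLeftRight ℝ A i i)).comp (Dη (f^[n] x) u) with hBdef
    have heq : fderiv ℝ (P (n + 1)) u - fderiv ℝ (P n) u
        = P n u • B + (fderiv ℝ (P n) u).smulRight (i - 1) := by
      rw [hfds n u hu]
      ext v
      simp only [hBdef, ContinuousLinearMap.sub_apply, ContinuousLinearMap.add_apply,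
        ContinuousLinearMap.smulRight_apply, ContinuousLinearMap.smul_apply,
        smul_eq_mul, mul_sub, mul_one]
      abel
    have hBa : ‖-(ContinuousLinearMap.mulLeftRight ℝ A i i)‖ ≤ (K * K) * (K * K) := by
      rw [norm_neg]
      exact (ContinuousLinearMap.opNorm_mulLeftRight_apply_apply_le ℝ A i i).trans
        (mul_le_mul (hinvηnorm _ u hu) (hinvηnorm _ u hu) (norm_nonneg _)
          (by positivity))
    have hB : ‖B‖ ≤ (K * K) * (K * K) * (K * C ^ α * r ^ n) :=
      (ContinuousLinearMap.opNorm_comp_le _ _).trans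
        (mul_le_mul hBa (hDηnorm n u hu) (norm_nonneg _) (by positivity))
    have h5 : ‖P n u • B‖ ≤ c * r ^ n := by
      refine (hsmulA _ _).trans ?_
      calc ‖P n u‖ * ‖B‖ ≤ (K * K) * ((K * K) * (K * K) * (K * C ^ α * r ^ n)) :=
            mul_le_mul (hPnorm n u hu) hB (norm_nonneg _) (by positivity)
        _ = c * r ^ n := by rw [hcdef]; ring
    have h6 : ‖(fderiv ℝ (P n) u).smulRight (i - 1)‖
        ≤ ‖fderiv ℝ (P n) u‖ * (a * r ^ n) :=
      (hsmulR _ _).trans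
        (mul_le_mul_of_nonneg_left (hinvηnear1 n u hu) (norm_nonneg _))
    rw [heq]
    exact (norm_add_le _ _).trans (by linarith)
  -- uniform bound on the derivatives
  have hca : (0:ℝ) < c / a := by positivity
  have hgrow : ∀ n : ℕ, ∀ u ∈ U, ‖fderiv ℝ (P n) u‖ + c / a
      ≤ c / a * Real.exp (a * ∑ i ∈ Finset.range n, r ^ i) := by
    intro n
    induction n with
    | zero =>
      intro u hu
      rw [hfd0 u hu]
      simp
    | succ n ih =>
      intro u hu
      have h1 : ‖fderiv ℝ (P (n + 1)) u‖
          ≤ ‖fderiv ℝ (P n) u‖ + (‖fderiv ℝ (P n) u‖ * (a * r ^ n) + c * r ^ n) := by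
        have h2 := hdiffb n u hu
        have h3 := norm_sub_norm_le (fderiv ℝ (P (n + 1)) u) (fderiv ℝ (P n) u)
        linarith
      have hexpand : (‖fderiv ℝ (P n) u‖ + c / a) * (1 + a * r ^ n)
          = ‖fderiv ℝ (P n) u‖ + c / a
            + (‖fderiv ℝ (P n) u‖ * (a * r ^ n) + c * r ^ n) := by
        field_simp
      have hrn : (0:ℝ) ≤ r ^ n := by positivity
      calc ‖fderiv ℝ (P (n + 1)) u‖ + c / a
          ≤ (‖fderiv ℝ (P n) u‖ + c / a) * (1 + a * r ^ n) := by
            rw [hexpand]; linarith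
        _ ≤ (c / a * Real.exp (a * ∑ i ∈ Finset.range n, r ^ i)) * (1 + a * r ^ n) := by
            refine mul_le_mul_of_nonneg_right (ih u hu) ?_
            nlinarith [mul_nonneg ha.le hrn]
        _ ≤ (c / a * Real.exp (a * ∑ i ∈ Finset.range n, r ^ i)) * Real.exp (a * r ^ n) := by
            refine mul_le_mul_of_nonneg_left ?_ (by positivity)
            have := Real.add_one_le_exp (a * r ^ n)
            linarith
        _ = c / a * Real.exp (a * ∑ i ∈ Finset.range (n + 1), r ^ i) := by
            rw [Finset.sum_range_succ, mul_add, Real.exp_add, mul_assoc]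
  have hsum : ∀ n : ℕ, (∑ i ∈ Finset.range n, r ^ i) ≤ (1 - r)⁻¹ := by
    intro n
    rw [← tsum_geometric_of_lt_one hr0.le hr1]
    exact Summable.sum_le_tsum (Finset.range n) (fun i _ => by positivity)
      (summable_geometric_of_lt_one hr0.le hr1)
  set Bnd : ℝ := c / a * Real.exp (a * (1 - r)⁻¹) with hBnddef
  have hBnd : ∀ n : ℕ, ∀ u ∈ U, ‖fderiv ℝ (P n) u‖ ≤ Bnd := by
    intro n u hu
    have h1 := hgrow n u hu
    have h2 : c / a * Real.exp (a * ∑ i ∈ Finset.range n, r ^ i) ≤ Bnd := by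
      rw [hBnddef]
      refine mul_le_mul_of_nonneg_left (Real.exp_le_exp.2 ?_) hca.le
      exact mul_le_mul_of_nonneg_left (hsum n) ha.le
    linarith
  have hBnd0 : (0:ℝ) ≤ Bnd := by positivity
  set c₂ : ℝ := Bnd * a + c with hc₂def
  have hc₂ : 0 < c₂ := by positivity
  -- geometric Cauchy estimates
  have hgeo : ∀ u ∈ U, ∀ n : ℕ,
      dist (fderiv ℝ (P n) u) (fderiv ℝ (P (n + 1)) u) ≤ c₂ * r ^ n := by
    intro u hu n
    rw [dist_eq_norm, norm_sub_rev]
    calc ‖fderiv ℝ (P (n + 1)) u - fderiv ℝ (P n) u‖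
        ≤ ‖fderiv ℝ (P n) u‖ * (a * r ^ n) + c * r ^ n := hdiffb n u hu
      _ ≤ Bnd * (a * r ^ n) + c * r ^ n := by
          have hrn : (0:ℝ) ≤ a * r ^ n := by positivity
          exact add_le_add (mul_le_mul_of_nonneg_right (hBnd n u hu) hrn) le_rfl
      _ = c₂ * r ^ n := by rw [hc₂def]; ring
  have hlim : ∀ u, u ∈ U → ∃ L : EuclideanSpace ℝ (Fin d) →L[ℝ] A,
      Filter.Tendsto (fun n => fderiv ℝ (P n) u) Filter.atTop (nhds L) :=
    fun u hu => cauchySeq_tendsto_of_complete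
      (cauchySeq_of_le_geometric r c₂ hr1 (hgeo u hu))
  choose G hG using hlim
  set g' : EuclideanSpace ℝ (Fin d) → (EuclideanSpace ℝ (Fin d) →L[ℝ] A) :=
    fun u => if h : u ∈ U then G u h else 0 with hg'def
  have hg't : ∀ u (hu : u ∈ U),
      Filter.Tendsto (fun n => fderiv ℝ (P n) u) Filter.atTop (nhds (g' u)) := by
    intro u hu
    simpa [hg'def, dif_pos hu] using hG u hu
  have hg'dist : ∀ u ∈ U, ∀ n : ℕ,
      dist (fderiv ℝ (P n) u) (g' u) ≤ c₂ * r ^ n / (1 - r) :=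
    fun u hu n => dist_le_of_le_geometric_of_tendsto r c₂ hr1 (hgeo u hu)
      (hg't u hu) n
  -- uniform convergence of derivatives
  have hunif : TendstoUniformlyOn (fun n u => fderiv ℝ (P n) u) g' Filter.atTop U := by
    rw [Metric.tendstoUniformlyOn_iff]
    intro ε hε
    have h0 : Filter.Tendsto (fun n : ℕ => c₂ * r ^ n / (1 - r)) Filter.atTop (nhds 0) := by
      have h1 : Filter.Tendsto (fun n : ℕ => r ^ n) Filter.atTop (nhds 0) :=
        tendsto_pow_atTop_nhds_zero_of_lt_one hr0.le hr1
      have h2 := (h1.const_mul c₂).div_const (1 - r)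
      simpa using h2
    filter_upwards [h0.eventually_lt_const hε] with n hn u hu
    calc dist (g' u) (fderiv ℝ (P n) u) = dist (fderiv ℝ (P n) u) (g' u) :=
          dist_comm _ _
      _ ≤ c₂ * r ^ n / (1 - r) := hg'dist u hu n
      _ < ε := hn
  -- pointwise convergence of the approximants
  have hQt : ∀ u, u ∈ U → Filter.Tendsto (fun n => P n u) Filter.atTop
      (nhds (φ x u * Ring.inverse (φ p u))) := by
    intro u hu
    rw [tendsto_iff_norm_sub_tendsto_zero]
    have hbound : ∀ n : ℕ, ‖P n u - φ x u * Ring.inverse (φ p u)‖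
        ≤ K * (K * (K * (K * C ^ α))) * r ^ n := by
      intro n
      have hsub : Ring.inverse (φ (f^[n] x) u) - Ring.inverse (φ p u)
          = Ring.inverse (φ (f^[n] x) u)
            * ((φ p u - φ (f^[n] x) u) * Ring.inverse (φ p u)) := by
        rw [sub_mul, Ring.mul_inverse_cancel _ (hφ p u hu).1, mul_sub, mul_one,
          ← mul_assoc, Ring.inverse_mul_cancel _ (hφ (f^[n] x) u hu).1, one_mul]
      have heq : P n u - φ x u * Ring.inverse (φ p u)
          = φ x u * (Ring.inverse (φ (f^[n] x) u)
              * ((φ p u - φ (f^[n] x) u) * Ring.inverse (φ p u))) := by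
        rw [← hsub, hPdef, mul_sub]
      rw [heq]
      have hφd : ‖φ p u - φ (f^[n] x) u‖ ≤ K * (C ^ α * r ^ n) := by
        have h := hHolφ p (f^[n] x) u hu
        rw [dist_comm] at h
        exact h.trans (mul_le_mul_of_nonneg_left (hdistpow n) hK.le)
      calc ‖φ x u * (Ring.inverse (φ (f^[n] x) u)
              * ((φ p u - φ (f^[n] x) u) * Ring.inverse (φ p u)))‖
          ≤ ‖φ x u‖ * (‖Ring.inverse (φ (f^[n] x) u)‖
              * (‖φ p u - φ (f^[n] x) u‖ * ‖Ring.inverse (φ p u)‖)) := by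
            refine (norm_mul_le _ _).trans ?_
            refine mul_le_mul_of_nonneg_left ?_ (norm_nonneg _)
            refine (norm_mul_le _ _).trans ?_
            exact mul_le_mul_of_nonneg_left (norm_mul_le _ _) (norm_nonneg _)
        _ ≤ K * (K * ((K * (C ^ α * r ^ n)) * K)) := by
            gcongr <;>
              first
                | exact (hφ x u hu).2.1
                | exact (hφ (f^[n] x) u hu).2.2
                | exact hφd
                | exact (hφ p u hu).2.2
                | positivity
        _ = K * (K * (K * (K * C ^ α))) * r ^ n := by ring
    have h1 : Filter.Tendsto (fun n : ℕ => K * (K * (K * (K * C ^ α))) * r ^ n)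
        Filter.atTop (nhds 0) := by
      have h2 : Filter.Tendsto (fun n : ℕ => r ^ n) Filter.atTop (nhds 0) :=
        tendsto_pow_atTop_nhds_zero_of_lt_one hr0.le hr1
      simpa using h2.const_mul (K * (K * (K * (K * C ^ α))))
    exact squeeze_zero (fun n => norm_nonneg _) hbound h1
  -- the limit function is differentiable
  have hQd : ∀ u ∈ U, HasFDerivAt (fun w => φ x w * Ring.inverse (φ p w)) (g' u) u :=
    fun u hu => hasFDerivAt_of_tendstoUniformlyOn
      (g := fun w => φ x w * Ring.inverse (φ p w)) hU hunif
      (fun n w hw => (hder n w hw).hasFDerivAt) hQt hu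
  -- conclusion
  intro u hu
  have h1 : DifferentiableAt ℝ (fun w => (φ x w * Ring.inverse (φ p w)) * φ p w) u :=
    ((hQd u hu).differentiableAt).mul (hdφp u hu)
  refine h1.congr_of_eventuallyEq ?_
  refine Filter.eventuallyEq_of_mem (hU.mem_nhds hu) fun w hw => ?_
  rw [mul_assoc, Ring.inverse_mul_cancel _ (hφ p w hw).1, mul_one]
end

section
/- Let A be a unital Banach algebra over ℝ, U ⊆ ℝ^d open, M a compact metric space, f : M → M continuous, p ∈ M with f(p) = p, 0 < λ < 1, and suppose the exponential stable set S := { x ∈ M : ∃ C > 0, ∀ n ≥ 0, d(f^[n](x), p) ≤ C λⁿ } is dense in M. Let 0 < α ≤ 1, K > 0, and let η : M → U → A, φ : M → U → A satisfy: (i) φ(z)(u) is invertible with ‖φ(z)(u)‖ ≤ K and ‖φ(z)(u)⁻¹‖ ≤ K, and (z,u) ↦ φ(z)(u) is continuous; (ii) φ(f z)(u) = η(z)(u) * φ(z)(u) for all z, u; (iii) for every z, u ↦ η(z)(u) is Fréchet differentiable with derivative Dη(z)(u) satisfying ‖Dη(z)(u)‖ ≤ K, and (z,u) ↦ Dη(z)(u)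 is continuous; (iv) for all z, z', u: ‖η(z)(u) − η(z')(u)‖ ≤ K d(z,z')^α, ‖Dη(z)(u) − Dη(z')(u)‖ ≤ K d(z,z')^α, ‖φ(z)(u) − φ(z')(u)‖ ≤ K d(z,z')^α; (v) u ↦ φ(p)(u) is Fréchet differentiable with derivative γ'(u) : ℝ^d → A. Suppose further that ξ : M → U → (ℝ^d →L A) is continuous in (z,u) and satisfies the commutative cohomology equation ξ(f z)(u) v = ξ(z)(u) v + φ(f z)(u)⁻¹ * (Dη(z)(u) v) * φ(z)(u) for all z, u, v, together with the normalization ξ(p)(u) v = φ(p)(u)⁻¹ * (γ'(u) v). Then for every z ∈ M and u ∈ U, the map w ↦ φ(z)(w) is Fréchet differentiable at u with derivative v ↦ φ(z)(u) * (ξ(z)(u) v). -/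
open Filter Metric Set

/-- Two-sided inverse determines `Ring.inverse`. -/
private lemma aux_inverse_eq {A : Type*} [Ring A] {a b : A} (h1 : a * b = 1) (h2 : b * a = 1) :
    Ring.inverse a = b := by
  have : a = ((⟨a, b, h1, h2⟩ : Aˣ) : A) := rfl
  rw [this, Ring.inverse_unit]
  rfl

/-- Two-sided inverse gives a unit. -/
private lemma aux_isUnit {A : Type*} [Ring A] {a b : A} (h1 : a * b = 1) (h2 : b * a = 1) :
    IsUnit a := ⟨⟨a, b, h1, h2⟩, rfl⟩

/-- Uniform convergence along a convergent parameter sequence, from continuity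
on a product with compact fibers. -/
private lemma aux_unif {M E X : Type*} [MetricSpace M] [CompactSpace M]
    [PseudoMetricSpace E] [PseudoMetricSpace X]
    (Θ : M → E → X) (V : Set E)
    (hcont : ContinuousOn (fun q : M × E => Θ q.1 q.2) (Set.univ ×ˢ V))
    (cb : Set E) (hcb : IsCompact cb) (hsub : cb ⊆ V)
    (y : ℕ → M) (q : M) (hy : Tendsto y atTop (nhds q)) :
    TendstoUniformlyOn (fun n w => Θ (y n) w) (fun w => Θ q w) atTop cb := by
  have hK : IsCompact ((Set.univ : Set M) ×ˢ cb) := isCompact_univ.prod hcb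
  have hc2 : ContinuousOn (fun q : M × E => Θ q.1 q.2) (Set.univ ×ˢ cb) :=
    hcont.mono (Set.prod_mono subset_rfl hsub)
  have huc := hK.uniformContinuousOn_of_continuous hc2
  rw [Metric.uniformContinuousOn_iff] at huc
  rw [Metric.tendstoUniformlyOn_iff]
  intro ε hε
  obtain ⟨δ, hδpos, hδ⟩ := huc ε hε
  have hev : ∀ᶠ n in atTop, dist (y n) q < δ := (Metric.tendsto_nhds.mp hy) δ hδpos
  filter_upwards [hev] with n hn w hw
  have hd : dist ((q, w) : M × E) ((y n, w) : M × E) < δ := by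
    have heq : dist ((q, w) : M × E) ((y n, w) : M × E) = max (dist q (y n)) 0 := by
      rw [Prod.dist_eq, dist_self]
    rw [heq]
    exact max_lt (by rwa [dist_comm]) hδpos
  exact hδ (q, w) ⟨trivial, hw⟩ (y n, w) ⟨trivial, hw⟩ hd

/-- Key noncommutative algebra identity for the inductive derivative computation. -/
private lemma aux_alg {A : Type*} [Ring A] (a x x' y' g s t : A) (hx : x' * x = 1) :
    a * (s - (t + y' * g * x)) * y' =
      a * x' * -(x * y' * g * (x * y')) + a * ((s - t)) * x' * (x * y') := by
  have h1 : a * x' * -(x * y' * g * (x * y')) = -(a * (x' * x) * (y' * (g * (x * y')))) := by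
    noncomm_ring
  have h2 : a * ((s - t)) * x' * (x * y') = a * (s - t) * ((x' * x) * y') := by
    noncomm_ring
  rw [h1, h2, hx]
  noncomm_ring

set_option maxHeartbeats 2000000 in
/-- The `r = 1` case of smooth dependence on parameters of solutions of cohomology
equations (Banach-algebra form): if the exponential stable set of the fixed point `p` is
dense, `φ` solves the cohomology equation with the stated bounds, continuity and Hölder
hypotheses, `u ↦ φ p u` is differentiable with derivative `γ'`, and `ξ` is a continuous
solution of the derived commutative cohomology equation with the natural normalization at
`p`, then `u ↦ φ z u` is differentiable for every `z` with derivative `v ↦ φ z u * ξ z u v`. -/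
theorem stmt_10 {A : Type*} [NormedRing A] [NormedAlgebra ℝ A] [CompleteSpace A]
    {d : ℕ} (U : Set (EuclideanSpace ℝ (Fin d))) (hU : IsOpen U)
    {M : Type*} [MetricSpace M] [CompactSpace M] (f : M → M) (hf : Continuous f)
    (p : M) (hp : f p = p) (lam : ℝ) (hlam0 : 0 < lam) (hlam1 : lam < 1)
    (hdense : Dense {x : M | ∃ C > (0:ℝ), ∀ n : ℕ, dist (f^[n] x) p ≤ C * lam ^ n})
    (α : ℝ) (hα0 : 0 < α) (hα1 : α ≤ 1) (K : ℝ) (hK : 0 < K)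
    (η φ : M → EuclideanSpace ℝ (Fin d) → A)
    (Dη : M → EuclideanSpace ℝ (Fin d) → EuclideanSpace ℝ (Fin d) →L[ℝ] A)
    (hφ : ∀ z : M, ∀ u ∈ U,
      IsUnit (φ z u) ∧ ‖φ z u‖ ≤ K ∧ ‖Ring.inverse (φ z u)‖ ≤ K)
    (hφcont : ContinuousOn (fun q : M × EuclideanSpace ℝ (Fin d) => φ q.1 q.2)
      (Set.univ ×ˢ U))
    (hcoh : ∀ z : M, ∀ u ∈ U, φ (f z) u = η z u * φ z u)
    (hdη : ∀ z : M, ∀ u ∈ U, HasFDerivAt (η z) (Dη z u) u ∧ ‖Dη z u‖ ≤ K)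
    (hDηcont : ContinuousOn (fun q : M × EuclideanSpace ℝ (Fin d) => Dη q.1 q.2)
      (Set.univ ×ˢ U))
    (hHolη : ∀ z z' : M, ∀ u ∈ U, ‖η z u - η z' u‖ ≤ K * dist z z' ^ α)
    (hHolDη : ∀ z z' : M, ∀ u ∈ U, ‖Dη z u - Dη z' u‖ ≤ K * dist z z' ^ α)
    (hHolφ : ∀ z z' : M, ∀ u ∈ U, ‖φ z u - φ z' u‖ ≤ K * dist z z' ^ α)
    (γ' : EuclideanSpace ℝ (Fin d) → EuclideanSpace ℝ (Fin d) →L[ℝ] A)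
    (hγ : ∀ u ∈ U, HasFDerivAt (φ p) (γ' u) u)
    (ξ : M → EuclideanSpace ℝ (Fin d) → EuclideanSpace ℝ (Fin d) →L[ℝ] A)
    (hξcont : ContinuousOn (fun q : M × EuclideanSpace ℝ (Fin d) => ξ q.1 q.2)
      (Set.univ ×ˢ U))
    (hξcoh : ∀ z : M, ∀ u ∈ U, ∀ v : EuclideanSpace ℝ (Fin d),
      ξ (f z) u v = ξ z u v + Ring.inverse (φ (f z) u) * (Dη z u v) * φ z u)
    (hξnorm : ∀ u ∈ U, ∀ v : EuclideanSpace ℝ (Fin d),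
      ξ p u v = Ring.inverse (φ p u) * (γ' u v)) :
    ∀ z : M, ∀ u ∈ U, ∃ D : EuclideanSpace ℝ (Fin d) →L[ℝ] A,
      HasFDerivAt (fun w => φ z w) D u ∧ ∀ v, D v = φ z u * (ξ z u v) := by
  classical
  set S : Set M := {x : M | ∃ C > (0:ℝ), ∀ n : ℕ, dist (f^[n] x) p ≤ C * lam ^ n} with hS
  -- basic unit facts
  have hunit : ∀ (z : M), ∀ w ∈ U, IsUnit (φ z w) := fun z w hw => (hφ z w hw).1
  have hinv_mul : ∀ (z : M), ∀ w ∈ U, Ring.inverse (φ z w) * φ z w = 1 :=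
    fun z w hw => Ring.inverse_mul_cancel _ (hunit z w hw)
  have hmul_inv : ∀ (z : M), ∀ w ∈ U, φ z w * Ring.inverse (φ z w) = 1 :=
    fun z w hw => Ring.mul_inverse_cancel _ (hunit z w hw)
  -- η is a unit with explicit two-sided inverse
  have hη2 : ∀ (y : M), ∀ w ∈ U,
      η y w * (φ y w * Ring.inverse (φ (f y) w)) = 1 ∧
      (φ y w * Ring.inverse (φ (f y) w)) * η y w = 1 := by
    intro y w hw
    have hc := hcoh y w hw
    constructor
    · calc η y w * (φ y w * Ring.inverse (φ (f y) w))
          = (η y w * φ y w) * Ring.inverse (φ (f y) w) := by rw [mul_assoc]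
        _ = φ (f y) w * Ring.inverse (φ (f y) w) := by rw [← hc]
        _ = 1 := hmul_inv (f y) w hw
    · have h1 : (φ y w * Ring.inverse (φ (f y) w) * η y w) * φ y w = φ y w := by
        calc (φ y w * Ring.inverse (φ (f y) w) * η y w) * φ y w
            = φ y w * (Ring.inverse (φ (f y) w) * (η y w * φ y w)) := by noncomm_ring
          _ = φ y w * (Ring.inverse (φ (f y) w) * φ (f y) w) := by rw [hc]
          _ = φ y w := by rw [hinv_mul (f y) w hw, mul_one]
      calc φ y w * Ring.inverse (φ (f y) w) * η y w
          = (φ y w * Ring.inverse (φ (f y) w) * η y w * φ y w) * Ring.inverse (φ y w) := by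
            rw [mul_assoc _ (φ y w) _, hmul_inv y w hw, mul_one]
        _ = φ y w * Ring.inverse (φ y w) := by rw [h1]
        _ = 1 := hmul_inv y w hw
  have hηunit : ∀ (y : M), ∀ w ∈ U, IsUnit (η y w) :=
    fun y w hw => aux_isUnit (hη2 y w hw).1 (hη2 y w hw).2
  have hinvη : ∀ (y : M), ∀ w ∈ U,
      Ring.inverse (η y w) = φ y w * Ring.inverse (φ (f y) w) :=
    fun y w hw => aux_inverse_eq (hη2 y w hw).1 (hη2 y w hw).2
  -- γ' in terms of ξ at p
  have hγval : ∀ w ∈ U, ∀ v : EuclideanSpace ℝ (Fin d), γ' w v = φ p w * ξ p w v := by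
    intro w hw v
    rw [hξnorm w hw v, ← mul_assoc, hmul_inv p w hw, one_mul]
  -- continuity of the pointwise inverse of φ
  have hinvφcont : ContinuousOn (fun q : M × EuclideanSpace ℝ (Fin d) => Ring.inverse (φ q.1 q.2)) (Set.univ ×ˢ U) := by
    intro q hq
    have h1 : ContinuousAt Ring.inverse (φ q.1 q.2) := by
      have := NormedRing.inverse_continuousAt (hunit q.1 q.2 hq.2).unit
      rwa [(hunit q.1 q.2 hq.2).unit_spec] at this
    exact ContinuousAt.comp_continuousWithinAt (g := Ring.inverse)
      (f := fun q : M × EuclideanSpace ℝ (Fin d) => φ q.1 q.2) h1 (hφcont q hq)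
  have hopen : IsOpen ((Set.univ : Set M) ×ˢ U) := isOpen_univ.prod hU
  -- joint continuity of φ, ξ, inverse at points of univ ×ˢ U
  have hφat : ∀ (y : M), ∀ w ∈ U, ContinuousAt (fun q : M × EuclideanSpace ℝ (Fin d) => φ q.1 q.2) (y, w) :=
    fun y w hw => hφcont.continuousAt (hopen.mem_nhds ⟨trivial, hw⟩)
  have hξat : ∀ (y : M), ∀ w ∈ U, ContinuousAt (fun q : M × EuclideanSpace ℝ (Fin d) => ξ q.1 q.2) (y, w) :=
    fun y w hw => hξcont.continuousAt (hopen.mem_nhds ⟨trivial, hw⟩)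
  -- slices continuous in w
  have hφslice : ∀ (y : M), ContinuousOn (fun q : M × EuclideanSpace ℝ (Fin d) => φ y q.2) (Set.univ ×ˢ U) := by
    intro y
    have : ContinuousOn (fun q : M × EuclideanSpace ℝ (Fin d) => ((y, q.2) : M × EuclideanSpace ℝ (Fin d))) (Set.univ ×ˢ U) :=
      (continuous_const.prodMk continuous_snd).continuousOn
    exact hφcont.comp this (fun q hq => ⟨trivial, hq.2⟩)
  have hξslice : ∀ (y : M), ContinuousOn (fun q : M × EuclideanSpace ℝ (Fin d) => ξ y q.2) (Set.univ ×ˢ U) := by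
    intro y
    have : ContinuousOn (fun q : M × EuclideanSpace ℝ (Fin d) => ((y, q.2) : M × EuclideanSpace ℝ (Fin d))) (Set.univ ×ˢ U) :=
      (continuous_const.prodMk continuous_snd).continuousOn
    exact hξcont.comp this (fun q hq => ⟨trivial, hq.2⟩)
  have hinvφslice : ∀ (y : M), ContinuousOn (fun q : M × EuclideanSpace ℝ (Fin d) => Ring.inverse (φ y q.2))
      (Set.univ ×ˢ U) := by
    intro y
    have : ContinuousOn (fun q : M × EuclideanSpace ℝ (Fin d) => ((y, q.2) : M × EuclideanSpace ℝ (Fin d))) (Set.univ ×ˢ U) :=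
      (continuous_const.prodMk continuous_snd).continuousOn
    exact hinvφcont.comp this (fun q hq => ⟨trivial, hq.2⟩)
  -- the candidate derivative family
  set H : M → EuclideanSpace ℝ (Fin d) → (EuclideanSpace ℝ (Fin d) →L[ℝ] A) := fun y w => (ContinuousLinearMap.mul ℝ A (φ y w)).comp (ξ y w)
    with hHdef
  have hHcont : ContinuousOn (fun q : M × EuclideanSpace ℝ (Fin d) => H q.1 q.2) (Set.univ ×ˢ U) := by
    apply ContinuousOn.clm_comp
    · exact (ContinuousLinearMap.mul ℝ A).continuous.comp_continuousOn hφcont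
    · exact hξcont
  -- MAIN STEP 1: differentiability on the stable set
  have key : ∀ z ∈ S, ∀ u ∈ U, HasFDerivAt (fun w => φ z w) (H z u) u := by
    intro z hz u hu
    obtain ⟨C, hC, hCle⟩ := hz
    have horb : Tendsto (fun n => f^[n] z) atTop (nhds p) := by
      rw [tendsto_iff_dist_tendsto_zero]
      apply squeeze_zero (fun n => dist_nonneg) (fun n => hCle n)
      have := tendsto_pow_atTop_nhds_zero_of_lt_one (le_of_lt hlam0) hlam1
      simpa using this.const_mul C
    obtain ⟨r, hr, hball⟩ : ∃ r > 0, Metric.closedBall u r ⊆ U := by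
      rcases Metric.nhds_basis_closedBall.mem_iff.mp (hU.mem_nhds hu) with ⟨r, hr, hsub⟩
      exact ⟨r, hr, hsub⟩
    have hballU : Metric.ball u r ⊆ U := fun w hw => hball (Metric.ball_subset_closedBall hw)
    -- the approximating maps and their derivatives
    set B : ℕ → EuclideanSpace ℝ (Fin d) → A := fun n w => φ z w * Ring.inverse (φ (f^[n] z) w) with hBdef
    set B' : ℕ → EuclideanSpace ℝ (Fin d) → (EuclideanSpace ℝ (Fin d) →L[ℝ] A) := fun n w =>
      ((ContinuousLinearMap.mul ℝ A).flip (Ring.inverse (φ (f^[n] z) w))).comp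
        (((ContinuousLinearMap.mul ℝ A) (φ z w)).comp (ξ z w - ξ (f^[n] z) w)) with hB'def
    set Θ : M → EuclideanSpace ℝ (Fin d) → (EuclideanSpace ℝ (Fin d) →L[ℝ] A) := fun y w =>
      ((ContinuousLinearMap.mul ℝ A).flip (Ring.inverse (φ y w) * φ p w)).comp
        (((ContinuousLinearMap.mul ℝ A) (φ z w)).comp (ξ z w - ξ y w))
      + ((ContinuousLinearMap.mul ℝ A) (φ z w * Ring.inverse (φ y w) * φ p w)).comp (ξ p w)
      with hΘdef
    -- differentiability of B n on U
    have hBdiff : ∀ n : ℕ, ∀ w ∈ U, HasFDerivAt (B n) (B' n w) w := by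
      intro n
      induction n with
      | zero =>
        intro w hw
        have heq : (fun _ : EuclideanSpace ℝ (Fin d) => (1:A)) =ᶠ[nhds w] B 0 := by
          filter_upwards [hU.mem_nhds hw] with w' hw'
          simp only [hBdef, Function.iterate_zero_apply]
          rw [hmul_inv z w' hw']
        have h0 : HasFDerivAt (fun _ : EuclideanSpace ℝ (Fin d) => (1:A)) (0 : EuclideanSpace ℝ (Fin d) →L[ℝ] A) w := hasFDerivAt_const _ _
        have h1 := h0.congr_of_eventuallyEq heq.symm
        have h2 : B' 0 w = 0 := by
          ext v
          simp [hB'def, Function.iterate_zero_apply, sub_self]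
        rw [h2]
        exact h1
      | succ n ih =>
        intro w hw
        have hwη := hηunit (f^[n] z) w hw
        -- derivative of the inverse of η along the orbit
        have hηinvdiff : HasFDerivAt (fun w' => Ring.inverse (η (f^[n] z) w'))
            (((-((ContinuousLinearMap.mulLeftRight ℝ A) (Ring.inverse (η (f^[n] z) w))
              (Ring.inverse (η (f^[n] z) w))))).comp (Dη (f^[n] z) w)) w := by
          have h := hasFDerivAt_ringInverse (𝕜 := ℝ) hwη.unit
          have hcoe : ((hwη.unit⁻¹ : Aˣ) : A) = Ring.inverse (η (f^[n] z) w) := by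
            rw [← Ring.inverse_unit, hwη.unit_spec]
          rw [hwη.unit_spec, hcoe] at h
          exact h.comp w (hdη (f^[n] z) w hw).1
        have hmul := (ih w hw).mul' hηinvdiff
        have heq : (fun w' => B n w' * Ring.inverse (η (f^[n] z) w')) =ᶠ[nhds w] B (n+1) := by
          filter_upwards [hU.mem_nhds hw] with w' hw'
          simp only [hBdef]
          rw [hinvη (f^[n] z) w' hw', Function.iterate_succ_apply' f n z]
          rw [show φ z w' * Ring.inverse (φ (f^[n] z) w') *
              (φ (f^[n] z) w' * Ring.inverse (φ (f (f^[n] z)) w')) =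
              φ z w' * (Ring.inverse (φ (f^[n] z) w') * φ (f^[n] z) w') *
              Ring.inverse (φ (f (f^[n] z)) w') from by noncomm_ring,
            hinv_mul (f^[n] z) w' hw', mul_one]
        have h2 := hmul.congr_of_eventuallyEq heq.symm
        have hD : B' (n+1) w = B n w • (((-((ContinuousLinearMap.mulLeftRight ℝ A)
              (Ring.inverse (η (f^[n] z) w)) (Ring.inverse (η (f^[n] z) w))))).comp
              (Dη (f^[n] z) w))
            + (B' n w).smulRight (Ring.inverse (η (f^[n] z) w)) := by
          ext v
          simp only [hB'def, hBdef, ContinuousLinearMap.add_apply, ContinuousLinearMap.coe_comp',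
            Function.comp_apply, ContinuousLinearMap.flip_apply, ContinuousLinearMap.sub_apply,
            ContinuousLinearMap.mul_apply', ContinuousLinearMap.smul_apply,
            ContinuousLinearMap.smulRight_apply, ContinuousLinearMap.neg_apply,
            ContinuousLinearMap.mulLeftRight_apply, smul_eq_mul]
          rw [hinvη (f^[n] z) w hw, Function.iterate_succ_apply' f n z,
            hξcoh (f^[n] z) w hw v]
          exact aux_alg (φ z w) (φ (f^[n] z) w) (Ring.inverse (φ (f^[n] z) w))
            (Ring.inverse (φ (f (f^[n] z)) w)) (Dη (f^[n] z) w v) (ξ z w v) (ξ (f^[n] z) w v)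
            (hinv_mul (f^[n] z) w hw)
        rw [hD]
        exact h2
    -- derivative of the approximations g_n = B n * φ p
    have hgdiff : ∀ n : ℕ, ∀ w ∈ U,
        HasFDerivAt (fun w' => B n w' * φ p w') (Θ (f^[n] z) w) w := by
      intro n w hw
      have hmul := (hBdiff n w hw).mul' (hγ w hw)
      have hD : Θ (f^[n] z) w = B n w • γ' w + (B' n w).smulRight (φ p w) := by
        ext v
        simp only [hΘdef, hB'def, hBdef, ContinuousLinearMap.add_apply,
          ContinuousLinearMap.coe_comp', Function.comp_apply, ContinuousLinearMap.flip_apply,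
          ContinuousLinearMap.sub_apply, ContinuousLinearMap.mul_apply',
          ContinuousLinearMap.smul_apply, ContinuousLinearMap.smulRight_apply, smul_eq_mul]
        rw [hγval w hw v]
        noncomm_ring
      rw [hD]
      exact hmul
    -- continuity of Θ in (y, w)
    have hΘcont : ContinuousOn (fun q : M × EuclideanSpace ℝ (Fin d) => Θ q.1 q.2) (Set.univ ×ˢ U) := by
      apply ContinuousOn.add
      · apply ContinuousOn.clm_comp
        · exact ((ContinuousLinearMap.mul ℝ A).flip).continuous.comp_continuousOn
            ((hinvφcont.mul (hφslice p)))
        · exact ContinuousOn.clm_comp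
            ((ContinuousLinearMap.mul ℝ A).continuous.comp_continuousOn (hφslice z))
            ((hξslice z).sub hξcont)
      · apply ContinuousOn.clm_comp
        · exact (ContinuousLinearMap.mul ℝ A).continuous.comp_continuousOn
            (((hφslice z).mul hinvφcont).mul (hφslice p))
        · exact hξslice p
    -- uniform convergence of the derivatives
    have hunifΘ : TendstoUniformlyOn (fun n w => Θ (f^[n] z) w) (fun w => Θ p w) atTop
        (Metric.closedBall u r) :=
      aux_unif Θ U hΘcont (Metric.closedBall u r) (isCompact_closedBall u r) hball
        (fun n => f^[n] z) p horb
    -- pointwise convergence of g_n to φ z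
    have hptwise : ∀ w ∈ Metric.ball u r,
        Tendsto (fun n => B n w * φ p w) atTop (nhds (φ z w)) := by
      intro w hw
      have hwU : w ∈ U := hballU hw
      have h1 : Tendsto (fun n => φ (f^[n] z) w) atTop (nhds (φ p w)) :=
        (hφat p w hwU).tendsto.comp (horb.prodMk_nhds tendsto_const_nhds)
      have h2 : Tendsto (fun n => Ring.inverse (φ (f^[n] z) w)) atTop
          (nhds (Ring.inverse (φ p w))) := by
        have hi : ContinuousAt Ring.inverse (φ p w) := by
          have := NormedRing.inverse_continuousAt (hunit p w hwU).unit
          rwa [(hunit p w hwU).unit_spec] at this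
        exact hi.tendsto.comp h1
      have h3 : Tendsto (fun n => φ z w * Ring.inverse (φ (f^[n] z) w) * φ p w) atTop
          (nhds (φ z w * Ring.inverse (φ p w) * φ p w)) :=
        (tendsto_const_nhds.mul h2).mul tendsto_const_nhds
      have h4 : φ z w * Ring.inverse (φ p w) * φ p w = φ z w := by
        rw [mul_assoc, hinv_mul p w hwU, mul_one]
      rw [h4] at h3
      simpa only [hBdef] using h3
    -- apply the uniform-limits-of-derivatives theorem
    have hmain : HasFDerivAt (fun w => φ z w) (Θ p u) u := by
      refine hasFDerivAt_of_tendstoUniformlyOn isOpen_ball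
        (hunifΘ.mono Metric.ball_subset_closedBall)
        (fun n w hw => hgdiff n w (hballU hw)) hptwise (Metric.mem_ball_self hr)
    have hfinal : Θ p u = H z u := by
      ext v
      simp only [hΘdef, hHdef, ContinuousLinearMap.add_apply, ContinuousLinearMap.coe_comp',
        Function.comp_apply, ContinuousLinearMap.flip_apply, ContinuousLinearMap.sub_apply,
        ContinuousLinearMap.mul_apply']
      rw [show φ z u * (ξ z u v - ξ p u v) * (Ring.inverse (φ p u) * φ p u)
          = φ z u * (ξ z u v - ξ p u v) * Ring.inverse (φ p u) * φ p u from by noncomm_ring]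
      rw [show φ z u * (ξ z u v - ξ p u v) * Ring.inverse (φ p u) * φ p u
          = φ z u * (ξ z u v - ξ p u v) * (Ring.inverse (φ p u) * φ p u) from by noncomm_ring,
        hinv_mul p u hu, mul_one]
      rw [show φ z u * Ring.inverse (φ p u) * φ p u = φ z u * (Ring.inverse (φ p u) * φ p u)
        from by noncomm_ring, hinv_mul p u hu, mul_one]
      noncomm_ring
    rw [hfinal] at hmain
    exact hmain
  -- MAIN STEP 2: extension to all of M by density
  intro z u hu
  refine ⟨H z u, ?_, fun v => by simp [hHdef, ContinuousLinearMap.mul_apply']⟩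
  obtain ⟨r, hr, hball⟩ : ∃ r > 0, Metric.closedBall u r ⊆ U := by
    rcases Metric.nhds_basis_closedBall.mem_iff.mp (hU.mem_nhds hu) with ⟨r, hr, hsub⟩
    exact ⟨r, hr, hsub⟩
  rw [hasFDerivAt_iff_isLittleO_nhds_zero, Asymptotics.isLittleO_iff]
  intro c hc
  -- uniform continuity of H on M × closedBall u r
  have huc := ((isCompact_univ.prod (isCompact_closedBall u r)).uniformContinuousOn_of_continuous
    (hHcont.mono (Set.prod_mono subset_rfl hball)))
  rw [Metric.uniformContinuousOn_iff] at huc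
  obtain ⟨δ₀, hδ₀, hδ⟩ := huc c hc
  set δ₁ : ℝ := min δ₀ r with hδ₁def
  have hδ₁ : 0 < δ₁ := lt_min hδ₀ hr
  have hballδU : Metric.ball u δ₁ ⊆ U := fun w hw =>
    hball (Metric.ball_subset_closedBall (Metric.ball_subset_ball (min_le_right _ _) hw))
  have main : ∀ v : EuclideanSpace ℝ (Fin d), ‖v‖ < δ₁ → ‖φ z (u + v) - φ z u - (H z u) v‖ ≤ c * ‖v‖ := by
    intro v hv
    have huv : u + v ∈ Metric.ball u δ₁ := by
      rw [Metric.mem_ball, dist_eq_norm, add_sub_cancel_left]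
      exact hv
    have huvU : u + v ∈ U := hballδU huv
    -- bound on S by the mean value inequality
    have hSle : ∀ z' ∈ S, ‖φ z' (u + v) - φ z' u - (H z' u) v‖ ≤ c * ‖v‖ := by
      intro z' hz'
      have hder : ∀ w ∈ Metric.ball u δ₁,
          HasFDerivWithinAt (fun w' => φ z' w' - (H z' u) w') (H z' w - H z' u)
            (Metric.ball u δ₁) w := by
        intro w hw
        exact ((key z' hz' w (hballδU hw)).sub ((H z' u).hasFDerivAt)).hasFDerivWithinAt
      have hbound : ∀ w ∈ Metric.ball u δ₁, ‖H z' w - H z' u‖ ≤ c := by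
        intro w hw
        have hwcb : w ∈ Metric.closedBall u r :=
          Metric.ball_subset_closedBall (Metric.ball_subset_ball (min_le_right _ _) hw)
        have hucb : u ∈ Metric.closedBall u r := Metric.mem_closedBall_self (le_of_lt hr)
        have hdlt : dist ((z', w) : M × EuclideanSpace ℝ (Fin d)) ((z', u)) < δ₀ := by
          have heq : dist ((z', w) : M × EuclideanSpace ℝ (Fin d)) ((z', u))
              = max (0:ℝ) (dist w u) := by
            rw [Prod.dist_eq, dist_self]
          rw [heq]
          exact max_lt hδ₀ (lt_of_lt_of_le (Metric.mem_ball.mp hw) (min_le_left _ _))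
        have := hδ (z', w) ⟨trivial, hwcb⟩ (z', u) ⟨trivial, hucb⟩ hdlt
        rw [dist_eq_norm] at this
        exact le_of_lt this
      have hmv := Convex.norm_image_sub_le_of_norm_hasFDerivWithin_le hder hbound
        (convex_ball u δ₁) (Metric.mem_ball_self hδ₁) huv
      have hrw : (φ z' (u + v) - (H z' u) (u + v)) - (φ z' u - (H z' u) u)
          = φ z' (u + v) - φ z' u - (H z' u) v := by
        rw [map_add]
        abel
      rw [hrw] at hmv
      rw [add_sub_cancel_left] at hmv
      exact hmv
    -- extend to all z' by continuity and density
    have hGcont : Continuous (fun z' : M => ‖φ z' (u + v) - φ z' u - (H z' u) v‖) := by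
      apply Continuous.norm
      have c1 : Continuous (fun z' : M => φ z' (u + v)) := by
        rw [continuous_iff_continuousAt]
        intro z'
        have hemb : ContinuousAt (fun x : M => ((x, u + v) : M × EuclideanSpace ℝ (Fin d))) z' :=
          continuousAt_id.prodMk continuousAt_const
        exact ContinuousAt.comp (x := z') (hφat z' (u + v) huvU) hemb
      have c2 : Continuous (fun z' : M => φ z' u) := by
        rw [continuous_iff_continuousAt]
        intro z'
        have hemb : ContinuousAt (fun x : M => ((x, u) : M × EuclideanSpace ℝ (Fin d))) z' :=
          continuousAt_id.prodMk continuousAt_const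
        exact ContinuousAt.comp (x := z') (hφat z' u hu) hemb
      have c3 : Continuous (fun z' : M => (H z' u) v) := by
        rw [continuous_iff_continuousAt]
        intro z'
        have h1 : ContinuousAt (fun q : M × EuclideanSpace ℝ (Fin d) => H q.1 q.2) (z', u) :=
          hHcont.continuousAt (hopen.mem_nhds ⟨trivial, hu⟩)
        have hemb : ContinuousAt (fun x : M => ((x, u) : M × EuclideanSpace ℝ (Fin d))) z' :=
          continuousAt_id.prodMk continuousAt_const
        have h2 : ContinuousAt (fun z'' : M => H z'' u) z' := by
          have := ContinuousAt.comp (x := z') h1 hemb; exact this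
        exact ((ContinuousLinearMap.apply ℝ A v).continuous.continuousAt).comp h2
      exact (c1.sub c2).sub c3
    have hclosed : IsClosed {z' : M | ‖φ z' (u + v) - φ z' u - (H z' u) v‖ ≤ c * ‖v‖} :=
      isClosed_le hGcont continuous_const
    have hsubS : S ⊆ {z' : M | ‖φ z' (u + v) - φ z' u - (H z' u) v‖ ≤ c * ‖v‖} := hSle
    have : closure S ⊆ {z' : M | ‖φ z' (u + v) - φ z' u - (H z' u) v‖ ≤ c * ‖v‖} :=
      hclosed.closure_subset_iff.mpr hsubS
    rw [hdense.closure_eq] at this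
    exact this (Set.mem_univ z)
  filter_upwards [Metric.ball_mem_nhds (0:EuclideanSpace ℝ (Fin d)) hδ₁] with v hv
  have hvn : ‖v‖ < δ₁ := by rwa [Metric.mem_ball, dist_zero_right] at hv
  simpa using main v hvn
end

section
/- Let G be a Lie group with identity e and Lie algebra 𝔤 = T_e G, F a normed space, U ⊆ F open, and a, b, c : U → G maps differentiable at u ∈ U with c(w) = b(w) * a(w) for all w ∈ U. Define ξ_a(u) := (D L_{a(u)}(e))⁻¹ ∘ Da(u) : F → 𝔤 and ξ_c(u) := (D L_{c(u)}(e))⁻¹ ∘ Dc(u) : F → 𝔤. Then for every v ∈ F: ξ_c(u) v = ξ_a(u) v + ( D L_{c(u)⁻¹}(c(u)) ∘ D R_{a(u)}(b(u)) ∘ Db(u) ) v. -/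
open scoped Manifold

/-- If `c = b * a` on `U` with `a, b, c : U → G` differentiable at `u ∈ U`, then the
Lie-algebra valued logarithmic derivatives `ξ_a(u) = (DL_{a(u)}(e))⁻¹ ∘ Da(u)
= DL_{a(u)⁻¹}(a(u)) ∘ Da(u)` satisfy
`ξ_c(u) v = ξ_a(u) v + (DL_{c(u)⁻¹}(c(u)) ∘ DR_{a(u)}(b(u)) ∘ Db(u)) v` in `𝔤 = T_e G`. -/
theorem stmt_13 {E : Type*} [NormedAddCommGroup E] [NormedSpace ℝ E]
    {H : Type*} [TopologicalSpace H] (I : ModelWithCorners ℝ E H)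
    (G : Type*) [TopologicalSpace G] [ChartedSpace H G] [Group G]
    [IsManifold I (⊤ : ℕ∞) G] [LieGroup I (⊤ : ℕ∞) G]
    {F : Type*} [NormedAddCommGroup F] [NormedSpace ℝ F]
    (U : Set F) (hU : IsOpen U) (u : F) (hu : u ∈ U)
    (a b c : F → G)
    (hda : MDifferentiableAt 𝓘(ℝ, F) I a u)
    (hdb : MDifferentiableAt 𝓘(ℝ, F) I b u)
    (hdc : MDifferentiableAt 𝓘(ℝ, F) I c u)
    (hcoh : ∀ w ∈ U, c w = b w * a w) :
    ∀ v : F,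
      @id (TangentSpace I (1 : G))
        (mfderiv I I (fun y => (c u)⁻¹ * y) (c u) (mfderiv 𝓘(ℝ, F) I c u v)) =
      @id (TangentSpace I (1 : G))
        (mfderiv I I (fun y => (a u)⁻¹ * y) (a u) (mfderiv 𝓘(ℝ, F) I a u v)) +
      @id (TangentSpace I (1 : G))
        (mfderiv I I (fun y => (c u)⁻¹ * y) (c u)
          ((mfderiv I I (fun y => y * a u) (b u)) (mfderiv 𝓘(ℝ, F) I b u v))) := by
  intro v
  have hcu : c u = b u * a u := hcoh u hu
  have hm : MDifferentiableAt (I.prod I) I (fun p : G × G => p.1 * p.2) (b u, a u) :=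
    ((contMDiff_mul I ((⊤ : ℕ∞) : WithTop ℕ∞) (G := G)).mdifferentiable (by simp) _)
  have hpair : MDifferentiableAt 𝓘(ℝ, F) I (fun w => b w * a w) u :=
    hm.comp u (hdb.prodMk hda)
  have hcongr : c =ᶠ[nhds u] fun w => b w * a w :=
    Filter.eventuallyEq_of_mem (hU.mem_nhds hu) hcoh
  have h1 : mfderiv 𝓘(ℝ, F) I c u = mfderiv 𝓘(ℝ, F) I (fun w => b w * a w) u :=
    hcongr.mfderiv_eq
  -- product rule
  have h2 : mfderiv 𝓘(ℝ, F) I (fun w => b w * a w) u v =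
      mfderiv I I (fun y => y * a u) (b u) (mfderiv 𝓘(ℝ, F) I b u v) +
      mfderiv I I (fun y => b u * y) (a u) (mfderiv 𝓘(ℝ, F) I a u v) := by
    have hco : (fun w => b w * a w)
        = (fun p : G × G => p.1 * p.2) ∘ (fun w => (b w, a w)) := rfl
    rw [hco, mfderiv_comp u hm (hdb.prodMk hda)]
    have hp : mfderiv 𝓘(ℝ, F) (I.prod I) (fun w => (b w, a w)) u =
        (mfderiv 𝓘(ℝ, F) I b u).prod (mfderiv 𝓘(ℝ, F) I a u) := hdb.mfderiv_prod hda
    erw [ContinuousLinearMap.comp_apply, hp]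
    exact mfderiv_prod_eq_add_apply hm
  -- differentiability of translations
  have hdl : ∀ (g : G) (x : G), MDifferentiableAt I I (fun y => g * y) x := fun g x =>
    (contMDiff_mul_left (I := I) (n := ((⊤ : ℕ∞) : WithTop ℕ∞)) (a := g)).mdifferentiable (by simp) x
  -- key composition identity: DL_{c⁻¹}(c) ∘ DL_{b}(a) = DL_{a⁻¹}(a)
  have hkey : ∀ w : TangentSpace I (a u),
      mfderiv I I (fun y => (c u)⁻¹ * y) (c u) (mfderiv I I (fun y => b u * y) (a u) w) =
      mfderiv I I (fun y => (a u)⁻¹ * y) (a u) w := by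
    intro w
    rw [hcu]
    have hcomp : mfderiv I I ((fun y => (b u * a u)⁻¹ * y) ∘ (fun y => b u * y)) (a u) =
        (mfderiv I I (fun y => (b u * a u)⁻¹ * y) (b u * a u)).comp
          (mfderiv I I (fun y => b u * y) (a u)) :=
      mfderiv_comp (a u) (hdl _ _) (hdl _ _)
    have hfun : ((fun y => (b u * a u)⁻¹ * y) ∘ (fun y => b u * y))
        = (fun y => (a u)⁻¹ * y) := by
      funext y
      simp only [Function.comp_apply, mul_inv_rev, mul_assoc, inv_mul_cancel_left]
    rw [hfun] at hcomp
    rw [hcomp]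
    rfl
  dsimp only [id]
  rw [h1]
  erw [h2]
  erw [map_add, hkey, add_comm]
  rfl
end

section
/- Let G be a Lie group with identity e and Lie algebra 𝔤 = T_e G, F a normed space, U ⊆ F open, and n ≥ 1. Let η₀, …, η_{n−1} : U → G and φ₀, …, φ_n : U → G be maps differentiable on U such that φ_{i+1}(u) = η_i(u) * φ_i(u) for all u ∈ U and 0 ≤ i ≤ n−1, and φ_n = φ₀ as functions on U. Then for all u ∈ U and v ∈ F: Σ_{i=0}^{n−1} ( D L_{φ_{i+1}(u)⁻¹}(φ_{i+1}(u)) ∘ D R_{φ_i(u)}(η_i(u)) ∘ Dη_i(u) ) v = 0 in 𝔤. -/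
open scoped Manifold

section Aux

variable {E : Type*} [NormedAddCommGroup E] [NormedSpace ℝ E]
    {H : Type*} [TopologicalSpace H] (I : ModelWithCorners ℝ E H)
    {G : Type*} [TopologicalSpace G] [ChartedSpace H G] [Group G]
    [IsManifold I (⊤ : ℕ∞) G] [LieGroup I (⊤ : ℕ∞) G]
    {F : Type*} [NormedAddCommGroup F] [NormedSpace ℝ F]

/-- Leibniz rule for the differential of a product of Lie-group-valued maps. -/
theorem stmt_14_mfderiv_mul_apply {f g : F → G} {u : F}
    (hf : MDifferentiableAt 𝓘(ℝ, F) I f u)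
    (hg : MDifferentiableAt 𝓘(ℝ, F) I g u) (v : F) :
    (mfderiv 𝓘(ℝ, F) I (fun x => f x * g x) u v : E) =
      (mfderiv I I (fun y => y * g u) (f u)) (mfderiv 𝓘(ℝ, F) I f u v) +
      (mfderiv I I (fun y => f u * y) (g u)) (mfderiv 𝓘(ℝ, F) I g u v) := by
  have hm : MDifferentiableAt (I.prod I) I (fun p : G × G => p.1 * p.2) (f u, g u) :=
    (contMDiff_mul I ((⊤ : ℕ∞) : WithTop ℕ∞) (G := G)).mdifferentiableAt (by simp)
  have h1 : (fun x => f x * g x) = (fun p : G × G => p.1 * p.2) ∘ (fun x => (f x, g x)) := rfl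
  rw [h1, mfderiv_comp u hm (hf.prodMk hg), mfderiv_prod_eq_add_comp hm,
    hf.mfderiv_prod hg]
  rfl

end Aux

/-- Differentiating the periodic orbit obstruction for a Lie-group valued cocycle:
if `φ_{i+1} = η_i · φ_i` on `U` and `φ_n = φ_0`, with all maps differentiable on `U`, then
`Σ_{i<n} DL_{φ_{i+1}(u)⁻¹}(φ_{i+1}(u)) ∘ DR_{φ_i(u)}(η_i(u)) ∘ Dη_i(u)` vanishes in
`𝔤 = T_e G`. -/
theorem stmt_14 {E : Type*} [NormedAddCommGroup E] [NormedSpace ℝ E]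
    {H : Type*} [TopologicalSpace H] (I : ModelWithCorners ℝ E H)
    (G : Type*) [TopologicalSpace G] [ChartedSpace H G] [Group G]
    [IsManifold I (⊤ : ℕ∞) G] [LieGroup I (⊤ : ℕ∞) G]
    {F : Type*} [NormedAddCommGroup F] [NormedSpace ℝ F]
    (U : Set F) (hU : IsOpen U) (n : ℕ) (hn : 1 ≤ n)
    (η φ : ℕ → F → G)
    (hcoh : ∀ u ∈ U, ∀ i < n, φ (i + 1) u = η i u * φ i u)
    (hper : ∀ u ∈ U, φ n u = φ 0 u)
    (hdη : ∀ i < n, ∀ u ∈ U, MDifferentiableAt 𝓘(ℝ, F) I (η i) u)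
    (hdφ : ∀ i ≤ n, ∀ u ∈ U, MDifferentiableAt 𝓘(ℝ, F) I (φ i) u) :
    ∀ u ∈ U, ∀ v : F,
      ∑ i ∈ Finset.range n,
        @id (TangentSpace I (1 : G))
          (mfderiv I I (fun y => (φ (i + 1) u)⁻¹ * y) (φ (i + 1) u)
            ((mfderiv I I (fun y => y * φ i u) (η i u))
              (mfderiv 𝓘(ℝ, F) I (η i) u v))) = 0 := by
  intro u hu v
  have hUn : U ∈ nhds u := hU.mem_nhds hu
  -- the "logarithmic derivative" of φ i at u
  set A : ℕ → E := fun i =>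
    mfderiv I I (fun y => (φ i u)⁻¹ * y) (φ i u) (mfderiv 𝓘(ℝ, F) I (φ i) u v) with hA
  have key : ∀ i ∈ Finset.range n,
      @id (TangentSpace I (1 : G))
        (mfderiv I I (fun y => (φ (i + 1) u)⁻¹ * y) (φ (i + 1) u)
          ((mfderiv I I (fun y => y * φ i u) (η i u))
            (mfderiv 𝓘(ℝ, F) I (η i) u v))) = A (i + 1) - A i := by
    intro i hi
    rw [Finset.mem_range] at hi
    have hdφi := hdφ i hi.le u hu
    have hdφi1 := hdφ (i + 1) hi u hu
    have hdηi := hdη i hi u hu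
    have hcohi : φ (i + 1) u = η i u * φ i u := hcoh u hu i hi
    -- derivative of φ (i+1) via the Leibniz rule
    have hEq : (fun x => η i x * φ i x) =ᶠ[nhds u] φ (i + 1) :=
      Filter.eventuallyEq_of_mem hUn fun x hx => (hcoh x hx i hi).symm
    have hder : mfderiv 𝓘(ℝ, F) I (φ (i + 1)) u = mfderiv 𝓘(ℝ, F) I (fun x => η i x * φ i x) u :=
      (hEq.mfderiv_eq).symm
    have hleib :
        (mfderiv 𝓘(ℝ, F) I (φ (i + 1)) u v : E) =
          (mfderiv I I (fun y => y * φ i u) (η i u)) (mfderiv 𝓘(ℝ, F) I (η i) u v) +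
          (mfderiv I I (fun y => η i u * y) (φ i u)) (mfderiv 𝓘(ℝ, F) I (φ i) u v) := by
      rw [hder]
      exact stmt_14_mfderiv_mul_apply I hdηi hdφi v
    -- composing left translations
    have hLL : ∀ w : E,
        (mfderiv I I (fun y => (φ i u)⁻¹ * y) (φ i u) w : E) =
          mfderiv I I (fun y => (φ (i + 1) u)⁻¹ * y) (φ (i + 1) u)
            (mfderiv I I (fun y => η i u * y) (φ i u) w) := by
      intro w
      have hcomp : (fun y => (φ i u)⁻¹ * y) =
          (fun y => (φ (i + 1) u)⁻¹ * y) ∘ (fun y => η i u * y) := by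
        funext y
        simp only [Function.comp_apply, hcohi, mul_inv_rev, mul_assoc, inv_mul_cancel_left]
      have hcapp := mfderiv_comp_apply_of_eq (I' := I) (x := φ i u) (y := φ (i + 1) u)
        (f := fun y => η i u * y) (g := fun y => (φ (i + 1) u)⁻¹ * y)
        (mdifferentiableAt_mul_left) (mdifferentiableAt_mul_left) hcohi.symm w
      rw [hcomp]
      exact hcapp
    -- now compute
    have hlin := (mfderiv I I (fun y => (φ (i + 1) u)⁻¹ * y) (φ (i + 1) u)).map_add
      ((mfderiv I I (fun y => y * φ i u) (η i u)) (mfderiv 𝓘(ℝ, F) I (η i) u v))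
      ((mfderiv I I (fun y => η i u * y) (φ i u)) (mfderiv 𝓘(ℝ, F) I (φ i) u v))
    have hA1 : (A (i + 1) : E) =
        mfderiv I I (fun y => (φ (i + 1) u)⁻¹ * y) (φ (i + 1) u)
          ((mfderiv I I (fun y => y * φ i u) (η i u)) (mfderiv 𝓘(ℝ, F) I (η i) u v)) +
        mfderiv I I (fun y => (φ (i + 1) u)⁻¹ * y) (φ (i + 1) u)
          ((mfderiv I I (fun y => η i u * y) (φ i u)) (mfderiv 𝓘(ℝ, F) I (φ i) u v)) := by
      rw [hA]
      show (mfderiv I I (fun y => (φ (i + 1) u)⁻¹ * y) (φ (i + 1) u))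
          (mfderiv 𝓘(ℝ, F) I (φ (i + 1)) u v) = _
      rw [show (mfderiv 𝓘(ℝ, F) I (φ (i + 1)) u v : E) = _ from hleib]
      exact hlin
    have hA0 : (A i : E) =
        mfderiv I I (fun y => (φ (i + 1) u)⁻¹ * y) (φ (i + 1) u)
          ((mfderiv I I (fun y => η i u * y) (φ i u)) (mfderiv 𝓘(ℝ, F) I (φ i) u v)) :=
      hLL _
    show (mfderiv I I (fun y => (φ (i + 1) u)⁻¹ * y) (φ (i + 1) u)
      ((mfderiv I I (fun y => y * φ i u) (η i u)) (mfderiv 𝓘(ℝ, F) I (η i) u v)) : E)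
        = A (i + 1) - A i
    rw [hA1, hA0]
    abel
  rw [Finset.sum_congr rfl key]
  erw [Finset.sum_range_sub (fun i => (A i : E))]
  -- A n = A 0
  have hEq0 : φ n =ᶠ[nhds u] φ 0 := Filter.eventuallyEq_of_mem hUn hper
  have h1 : mfderiv 𝓘(ℝ, F) I (φ n) u = mfderiv 𝓘(ℝ, F) I (φ 0) u := hEq0.mfderiv_eq
  have h2 : φ n u = φ 0 u := hper u hu
  have : A n = A 0 := by
    have hAn : A n =
        (fun g0 : G => (mfderiv I I (fun y => g0⁻¹ * y) g0
          (mfderiv 𝓘(ℝ, F) I (φ 0) u v) : E)) (φ n u) := by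
      show (mfderiv I I (fun y => (φ n u)⁻¹ * y) (φ n u)) (mfderiv 𝓘(ℝ, F) I (φ n) u v) = _
      rw [h1]
      rfl
    rw [hAn]
    exact congrArg (fun g0 : G => (mfderiv I I (fun y => g0⁻¹ * y) g0
      (mfderiv 𝓘(ℝ, F) I (φ 0) u v) : E)) h2
  rw [this]
  abel
end
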